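/- Let Q be a convex polytope with a polyhedral subdivision Q_1,...,Q_n and let f: Q → ℝ be a function that is affine on each Q_i. If f is convex on every union Q_i ∪ Q_j of two parts sharing a common facet, then f is convex on Q. -/

import Mathlib

/-- The dimension of a subset of a real vector space: the rank of the direction of
its affine span. -/
noncomputable def polyDim {E : Type*} [AddCommGroup E] [Module ℝ E] (s : Set E) : ℕ :=
  Module.finrank ℝ (affineSpan ℝ s).direction

/-- `f` is convex on `s` in the piecewise sense: the convexity inequality holds for all
convex combinations of points of `s` that again lie in `s`. -/
def PartialConvexOn {E : Type*} [AddCommGroup E] [Module ℝ E] (s : Set E)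
    (f : E → ℝ) : Prop :=
  ∀ ⦃x⦄, x ∈ s → ∀ ⦃y⦄, y ∈ s → ∀ ⦃a b : ℝ⦄, 0 ≤ a → 0 ≤ b → a + b = 1 →
    a • x + b • y ∈ s → f (a • x + b • y) ≤ a * f x + b * f y


open Set

section Helpers

variable {E : Type*} [NormedAddCommGroup E] [NormedSpace ℝ E]




/-- If two distinct points of the line through `x` and `p` lie in an affine subspace,
then both `x` and `p` lie in it. -/
lemma two_mem_line {W : AffineSubspace ℝ E} {x p : E} {l1 l2 : ℝ}
    (h1 : x + l1 • (p - x) ∈ W) (h2 : x + l2 • (p - x) ∈ W) (hne : l1 ≠ l2) :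
    x ∈ W ∧ p ∈ W := by
  have hd0 : (x + l2 • (p - x)) -ᵥ (x + l1 • (p - x)) ∈ W.direction :=
    AffineSubspace.vsub_mem_direction h2 h1
  have he : (x + l2 • (p - x)) -ᵥ (x + l1 • (p - x)) = (l2 - l1) • (p - x) := by
    simp only [vsub_eq_sub]; module
  rw [he] at hd0
  have hd : (p - x) ∈ W.direction := by
    have := Submodule.smul_mem W.direction (l2 - l1)⁻¹ hd0
    rwa [smul_smul, inv_mul_cancel₀ (sub_ne_zero.2 (Ne.symm hne)), one_smul] at this
  constructor
  · have := AffineSubspace.vadd_mem_of_mem_direction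
      (Submodule.smul_mem W.direction (-l1) hd) h1
    have he2 : (-l1) • (p - x) +ᵥ (x + l1 • (p - x)) = x := by
      simp only [vadd_eq_add]; module
    rwa [he2] at this
  · have := AffineSubspace.vadd_mem_of_mem_direction
      (Submodule.smul_mem W.direction (1 - l1) hd) h1
    have he2 : (1 - l1) • (p - x) +ᵥ (x + l1 • (p - x)) = p := by
      simp only [vadd_eq_add]; module
    rwa [he2] at this

/-- A nonempty convex set not contained in any of finitely many affine subspaces
contains a point avoiding all of them. -/
lemma exists_avoid_point {S : Set E} (hS : Convex ℝ S) {x : E} (hx : x ∈ S)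
    (𝒲 : Finset (AffineSubspace ℝ E)) (hW : ∀ W ∈ 𝒲, ¬ S ⊆ (W : Set E)) :
    ∃ s ∈ S, ∀ W ∈ 𝒲, s ∉ W := by
  classical
  induction 𝒲 using Finset.induction with
  | empty => exact ⟨x, hx, by simp⟩
  | @insert W 𝒯 hWT ih =>
    obtain ⟨s, hsS, hs⟩ := ih (fun V hV => hW V (Finset.mem_insert_of_mem hV))
    by_cases hsW : s ∈ W
    · obtain ⟨p, hpS, hpW⟩ := Set.not_subset.1 (hW W (Finset.mem_insert_self _ _))
      -- bad parameters for each V ∈ 𝒯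
      have hbad : ∀ V ∈ 𝒯, {l : ℝ | s + l • (p - s) ∈ V}.Subsingleton := by
        intro V hV l1 h1 l2 h2
        by_contra hne
        exact hs V hV (two_mem_line h1 h2 hne).1
      have hfin : (⋃ V ∈ 𝒯, {l : ℝ | s + l • (p - s) ∈ V}).Finite :=
        Set.Finite.biUnion 𝒯.finite_toSet
          (fun V hV => Set.Subsingleton.finite (hbad V hV))
      have hne : (Set.Ioc (0:ℝ) 1 \ ⋃ V ∈ 𝒯, {l : ℝ | s + l • (p - s) ∈ V}).Nonempty :=
        Set.Infinite.nonempty (Set.Infinite.diff (Set.Ioc_infinite zero_lt_one) hfin)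
      obtain ⟨l, hlmem, hlnot⟩ := hne
      refine ⟨s + l • (p - s), ?_, ?_⟩
      · have : (1 - l) • s + l • p ∈ S :=
          hS hsS hpS (by linarith [hlmem.2]) (le_of_lt hlmem.1) (by ring)
        convert this using 1; module
      · intro V hV
        rcases Finset.mem_insert.1 hV with rfl | hV'
        · intro hmem
          have h0 : s + (0:ℝ) • (p - s) ∈ V := by simpa using hsW
          exact hpW (two_mem_line h0 hmem (ne_of_lt hlmem.1)).2
        · intro hmem
          exact hlnot (Set.mem_biUnion hV' hmem)
    · exact ⟨s, hsS, fun V hV => by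
        rcases Finset.mem_insert.1 hV with rfl | hV'
        · exact hsW
        · exact hs V hV'⟩

/-- Points of `S` avoiding finitely many "proper" affine subspaces are dense in `S`. -/
lemma exists_avoid_near {S : Set E} (hS : Convex ℝ S) {x : E} (hx : x ∈ S)
    (𝒲 : Finset (AffineSubspace ℝ E)) (hW : ∀ W ∈ 𝒲, ¬ S ⊆ (W : Set E))
    {ε : ℝ} (hε : 0 < ε) :
    ∃ x' ∈ S, dist x' x ≤ ε ∧ ∀ W ∈ 𝒲, x' ∉ W := by
  classical
  obtain ⟨s, hsS, hs⟩ := exists_avoid_point hS hx 𝒲 hW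
  have hbad : ∀ V ∈ 𝒲, {l : ℝ | x + l • (s - x) ∈ V}.Subsingleton := by
    intro V hV l1 h1 l2 h2
    by_contra hne
    exact hs V hV (two_mem_line h1 h2 hne).2
  have hfin : (⋃ V ∈ 𝒲, {l : ℝ | x + l • (s - x) ∈ V}).Finite :=
    Set.Finite.biUnion 𝒲.finite_toSet (fun V hV => Set.Subsingleton.finite (hbad V hV))
  set δ := min 1 (ε / (‖s - x‖ + 1)) with hδ
  have hδpos : 0 < δ := lt_min one_pos (div_pos hε (by positivity))
  have hne : (Set.Ioc (0:ℝ) δ \ ⋃ V ∈ 𝒲, {l : ℝ | x + l • (s - x) ∈ V}).Nonempty :=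
    Set.Infinite.nonempty (Set.Infinite.diff (Set.Ioc_infinite hδpos) hfin)
  obtain ⟨l, hlmem, hlnot⟩ := hne
  refine ⟨x + l • (s - x), ?_, ?_, ?_⟩
  · have hl1 : l ≤ 1 := le_trans hlmem.2 (min_le_left _ _)
    have : (1 - l) • x + l • s ∈ S :=
      hS hx hsS (by linarith) (le_of_lt hlmem.1) (by ring)
    convert this using 1; module
  · have : dist (x + l • (s - x)) x = l * ‖s - x‖ := by
      rw [dist_eq_norm]
      simp only [add_sub_cancel_left, norm_smul, Real.norm_eq_abs,
        abs_of_pos hlmem.1]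
    rw [this]
    have hl2 : l ≤ ε / (‖s - x‖ + 1) := le_trans hlmem.2 (min_le_right _ _)
    have h1 : l * ‖s - x‖ ≤ (ε / (‖s - x‖ + 1)) * ‖s - x‖ :=
      mul_le_mul_of_nonneg_right hl2 (norm_nonneg _)
    have h2 : (ε / (‖s - x‖ + 1)) * ‖s - x‖ ≤ ε := by
      rw [div_mul_eq_mul_div, div_le_iff₀ (by positivity)]
      nlinarith [norm_nonneg (s - x)]
    linarith
  · intro V hV hmem
    exact hlnot (Set.mem_biUnion hV hmem)



/-- If `F` is a convex extreme subset of `C` and `C` lies in the affine span of `F`,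
then `C ⊆ F`. -/
lemma extreme_subset_of_span {C F : Set E} (hF : Convex ℝ F)
    (hext : IsExtreme ℝ C F) (hspan : C ⊆ (affineSpan ℝ F : Set E)) : C ⊆ F := by
  intro c hc
  have hc' : c ∈ affineSpan ℝ (Set.range (Subtype.val : F → E)) := by
    rw [Subtype.range_coe]; exact hspan hc
  obtain ⟨fs, w, hw, hcomb⟩ := eq_affineCombination_of_mem_affineSpan hc'
  rw [Finset.affineCombination_eq_linear_combination _ _ _ hw] at hcomb
  have hfs : fs.Nonempty := by
    rcases Finset.eq_empty_or_nonempty fs with rfl | h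
    · simp at hw
    · exact h
  set k : ℝ := (fs.card : ℝ) with hk
  have hkpos : (0:ℝ) < k := by
    rw [hk]
    exact_mod_cast Finset.card_pos.2 hfs
  set T : ℝ := fs.sup' hfs (fun i => |1/k - w i|) with hT
  have hTnn : 0 ≤ T := by
    obtain ⟨i, hi⟩ := hfs
    exact le_trans (abs_nonneg (1/k - w i))
      (Finset.le_sup' (fun i => |1/k - w i|) hi)
  set t : ℝ := (1/k) / (T + 1) with ht
  have htpos : 0 < t := div_pos (by positivity) (by linarith)
  -- the perturbed weights are nonnegative
  have hcoef : ∀ i ∈ fs, 0 ≤ (1+t)/k - t * w i := by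
    intro i hi
    have h1 : |1/k - w i| ≤ T := Finset.le_sup' (fun i => |1/k - w i|) hi
    have h2 : t * (T + 1) = 1/k := by
      rw [ht, div_mul_cancel₀]; linarith
    have h3 : t * |1/k - w i| ≤ t * T := mul_le_mul_of_nonneg_left h1 htpos.le
    have h4 : -(t * (1/k - w i)) ≤ t * T := le_trans (neg_le_abs _) (by
      calc |t * (1/k - w i)| = t * |1/k - w i| := by rw [abs_mul, abs_of_pos htpos]
        _ ≤ t * T := h3)
    have : (1+t)/k - t * w i = 1/k + t * (1/k - w i) := by field_simp; ring
    rw [this]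
    nlinarith
  have hk0 : k ≠ 0 := ne_of_gt hkpos
  have h1t : (0:ℝ) < 1 + t := by linarith
  have h1t0 : (1:ℝ) + t ≠ 0 := ne_of_gt h1t
  clear_value k T t
  -- the two auxiliary points
  set m : E := ∑ i ∈ fs, (1/k) • (i : E) with hm
  set p' : E := ∑ i ∈ fs, ((1+t)/k - t * w i) • (i : E) with hp'
  have hsum1 : ∑ i ∈ fs, (1/k : ℝ) = 1 := by
    rw [Finset.sum_const, nsmul_eq_mul, ← hk]
    field_simp
  have hsum2 : ∑ i ∈ fs, ((1+t)/k - t * w i) = 1 := by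
    rw [Finset.sum_sub_distrib, Finset.sum_const, ← Finset.mul_sum, hw, nsmul_eq_mul, ← hk]
    field_simp
    ring
  have hmF : m ∈ F := by
    have := fs.centerMass_mem_convexHull (w := fun _ => (1/k : ℝ))
      (fun i _ => by positivity) (by rw [hsum1]; norm_num)
      (fun i _ => (i : ↥F).2)
    rw [Finset.centerMass_eq_of_sum_1 _ _ hsum1] at this
    rwa [hF.convexHull_eq] at this
  have hp'F : p' ∈ F := by
    have := fs.centerMass_mem_convexHull (w := fun i => (1+t)/k - t * w i)
      hcoef (by rw [hsum2]; norm_num) (fun i _ => (i : ↥F).2)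
    rw [Finset.centerMass_eq_of_sum_1 _ _ hsum2] at this
    rwa [hF.convexHull_eq] at this
  -- m lies in the open segment from c to p'
  have hseg : m ∈ openSegment ℝ c p' := by
    refine ⟨t / (1+t), 1 / (1+t), div_pos htpos h1t, div_pos one_pos h1t, ?_, ?_⟩
    · rw [← add_div, div_eq_one_iff_eq h1t0]; ring
    rw [hcomb, hp', Finset.smul_sum, Finset.smul_sum, ← Finset.sum_add_distrib, hm]
    refine Finset.sum_congr rfl (fun i hi => ?_)
    rw [smul_smul, smul_smul, ← add_smul]
    congr 1
    field_simp
    ring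
  exact hext.2 hc (hext.1 hp'F) hmF hseg


/-- In a finite closed convex cover of `[0,1]`, some member contains a small
interval to the left of `t`. -/
lemma exists_left_interval {n : ℕ} {I : Fin n → Set ℝ} (hcl : ∀ i, IsClosed (I i))
    (hcv : ∀ i, Convex ℝ (I i)) (hcov : Icc (0:ℝ) 1 ⊆ ⋃ i, I i) {t : ℝ}
    (ht : t ∈ Icc (0:ℝ) 1) (ht0 : 0 < t) :
    ∃ i, ∃ ε > 0, Icc (t - ε) t ⊆ I i := by
  have hU : IsOpen (⋂ i, ⋂ (_ : t ∉ I i), (I i)ᶜ) :=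
    isOpen_iInter_of_finite fun i => isOpen_iInter_of_finite fun h => (hcl i).isOpen_compl
  have htU : t ∈ ⋂ i, ⋂ (_ : t ∉ I i), (I i)ᶜ :=
    mem_iInter.2 fun i => mem_iInter.2 fun h => h
  obtain ⟨ε, hε, hball⟩ := Metric.isOpen_iff.1 hU t htU
  set δ := min (ε/2) t with hδ
  have hδpos : 0 < δ := lt_min (by linarith) ht0
  have hu01 : t - δ ∈ Icc (0:ℝ) 1 :=
    ⟨by have := min_le_right (ε/2) t; simp only [hδ]; linarith,
     by have := ht.2; linarith⟩
  obtain ⟨i, hi⟩ := mem_iUnion.1 (hcov hu01)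
  have huball : t - δ ∈ Metric.ball t ε := by
    simp only [Metric.mem_ball, dist_eq_norm, Real.norm_eq_abs]
    rw [abs_of_nonpos (by linarith)]
    have := min_le_left (ε/2) t
    simp only [hδ]; linarith
  have hti : t ∈ I i := by
    by_contra hnot
    have := hball huball
    have := (mem_iInter.1 (mem_iInter.1 this i)) hnot
    exact this hi
  exact ⟨i, δ, hδpos, fun z hz => (hcv i).ordConnected.out hi hti hz⟩

/-- In a finite closed convex cover of `[0,1]`, some member contains a small
interval to the right of `t`. -/
lemma exists_right_interval {n : ℕ} {I : Fin n → Set ℝ} (hcl : ∀ i, IsClosed (I i))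
    (hcv : ∀ i, Convex ℝ (I i)) (hcov : Icc (0:ℝ) 1 ⊆ ⋃ i, I i) {t : ℝ}
    (ht : t ∈ Icc (0:ℝ) 1) (ht1 : t < 1) :
    ∃ i, ∃ ε > 0, Icc t (t + ε) ⊆ I i := by
  have hU : IsOpen (⋂ i, ⋂ (_ : t ∉ I i), (I i)ᶜ) :=
    isOpen_iInter_of_finite fun i => isOpen_iInter_of_finite fun h => (hcl i).isOpen_compl
  have htU : t ∈ ⋂ i, ⋂ (_ : t ∉ I i), (I i)ᶜ :=
    mem_iInter.2 fun i => mem_iInter.2 fun h => h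
  obtain ⟨ε, hε, hball⟩ := Metric.isOpen_iff.1 hU t htU
  set δ := min (ε/2) (1 - t) with hδ
  have hδpos : 0 < δ := lt_min (by linarith) (by linarith)
  have hu01 : t + δ ∈ Icc (0:ℝ) 1 :=
    ⟨by have := ht.1; linarith,
     by have := min_le_right (ε/2) (1-t); simp only [hδ]; linarith⟩
  obtain ⟨i, hi⟩ := mem_iUnion.1 (hcov hu01)
  have huball : t + δ ∈ Metric.ball t ε := by
    simp only [Metric.mem_ball, dist_eq_norm, Real.norm_eq_abs]
    rw [abs_of_nonneg (by linarith)]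
    have := min_le_left (ε/2) (1-t)
    simp only [hδ]; linarith
  have hti : t ∈ I i := by
    by_contra hnot
    have := hball huball
    have := (mem_iInter.1 (mem_iInter.1 this i)) hnot
    exact this hi
  exact ⟨i, δ, hδpos, fun z hz => (hcv i).ordConnected.out hti hi hz⟩

/-- A continuous function on `[0,1]` satisfying a local midpoint convexity condition
lies below its chord. -/
lemma le_chord_of_local_midpoint {g : ℝ → ℝ} (hc : ContinuousOn g (Icc 0 1))
    (hmid : ∀ t ∈ Ioo (0:ℝ) 1, ∃ ε > 0, t - ε ∈ Icc (0:ℝ) 1 ∧ t + ε ∈ Icc (0:ℝ) 1 ∧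
      g t ≤ (g (t - ε) + g (t + ε)) / 2) :
    ∀ θ ∈ Icc (0:ℝ) 1, g θ ≤ (1 - θ) * g 0 + θ * g 1 := by
  set h : ℝ → ℝ := fun t => g t - ((1 - t) * g 0 + t * g 1) with hh
  have hch : ContinuousOn h (Icc 0 1) := by
    apply hc.sub
    exact (Continuous.continuousOn (by continuity))
  have hmid' : ∀ t ∈ Ioo (0:ℝ) 1, ∃ ε > 0, t - ε ∈ Icc (0:ℝ) 1 ∧ t + ε ∈ Icc (0:ℝ) 1 ∧
      h t ≤ (h (t - ε) + h (t + ε)) / 2 := by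
    intro t htm
    obtain ⟨ε, hε, h1, h2, h3⟩ := hmid t htm
    exact ⟨ε, hε, h1, h2, by simp only [hh]; ring_nf; ring_nf at h3; linarith⟩
  have h0 : h 0 = 0 := by simp [hh]
  have h1 : h 1 = 0 := by simp [hh]
  suffices hle : ∀ θ ∈ Icc (0:ℝ) 1, h θ ≤ 0 by
    intro θ hθ
    have := hle θ hθ
    simp only [hh] at this
    linarith
  by_contra hcon
  push_neg at hcon
  obtain ⟨θ₀, hθ₀m, hθ₀⟩ := hcon
  obtain ⟨w, hwm, hwmax⟩ := isCompact_Icc.exists_isMaxOn ⟨0, by norm_num⟩ hch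
  set M := h w with hM
  have hMpos : 0 < M := lt_of_lt_of_le hθ₀ (hwmax hθ₀m)
  set W : Set ℝ := Icc 0 1 ∩ h ⁻¹' (Ici M) with hW
  have hWclosed : IsClosed W :=
    hch.preimage_isClosed_of_isClosed isClosed_Icc isClosed_Ici
  have hWne : W.Nonempty := ⟨w, hwm, le_refl M⟩
  have hWbdd : BddAbove W := BddAbove.mono (inter_subset_left) (bddAbove_Icc)
  set w' := sSup W with hw'
  have hw'W : w' ∈ W := hWclosed.csSup_mem hWne hWbdd
  have hw'M : h w' = M := le_antisymm (hwmax hw'W.1) hw'W.2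
  have hw'0 : w' ≠ 0 := by intro he; rw [he] at hw'M; rw [h0] at hw'M; linarith
  have hw'1 : w' ≠ 1 := by intro he; rw [he] at hw'M; rw [h1] at hw'M; linarith
  have hw'Ioo : w' ∈ Ioo (0:ℝ) 1 :=
    ⟨lt_of_le_of_ne hw'W.1.1 (Ne.symm hw'0), lt_of_le_of_ne hw'W.1.2 hw'1⟩
  clear_value M w'
  obtain ⟨ε, hε, hm1, hm2, hm3⟩ := hmid' w' hw'Ioo
  have hle1 : h (w' - ε) ≤ M := hM ▸ hwmax hm1
  have hle2 : h (w' + ε) ≤ M := hM ▸ hwmax hm2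
  have : M ≤ h (w' + ε) := by
    rw [hw'M] at hm3
    set A := h (w' - ε) with hA
    set B := h (w' + ε) with hB
    clear_value A B
    linarith
  have hmemW : w' + ε ∈ W := ⟨hm2, this⟩
  have h5 : w' + ε ≤ sSup W := le_csSup hWbdd hmemW
  rw [← hw'] at h5
  linarith





lemma affineMap_combo (gi : E →ᵃ[ℝ] ℝ) {c e : ℝ} (h : c + e = 1) (p q : E) :
    gi (c • p + e • q) = c * gi p + e * gi q := by
  have hc : c = 1 - e := by linarith
  subst hc
  have h1 : (1 - e) • p + e • q = e • (q - p) +ᵥ p := by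
    simp only [vadd_eq_add]; module
  rw [h1, AffineMap.map_vadd]
  rw [map_smul]
  have h2 : gi.linear (q - p) = gi q - gi p := by
    rw [← vsub_eq_sub, AffineMap.linearMap_vsub, vsub_eq_sub]
  rw [h2]
  simp only [vadd_eq_add, smul_eq_mul]
  ring

end Helpers


set_option maxHeartbeats 1600000 in
/-- Let `Q` be a convex polytope subdivided into polytopes `Q_1, …, Q_n` of the same
dimension forming a polyhedral complex, and let `f` be affine on each `Q_i`. If `f` is
convex on every union `Q_i ∪ Q_j` of two parts sharing a common facet, then `f` is
convex on `Q`. -/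
theorem stmt14 {N : Type*} [Fintype N] (n : ℕ) (Q : Set (N → ℝ))
    (Qp : Fin n → Set (N → ℝ))
    (V : Finset (N → ℝ)) (hQ : Q = convexHull ℝ (V : Set (N → ℝ)))
    (hVp : ∀ i, ∃ Vi : Finset (N → ℝ), Qp i = convexHull ℝ (Vi : Set (N → ℝ)))
    (hcover : (⋃ i, Qp i) = Q)
    (hdim : ∀ i, polyDim (Qp i) = polyDim Q)
    (hcomplex : ∀ i j, i ≠ j → Qp i ∩ Qp j = ∅ ∨
      (IsExtreme ℝ (Qp i) (Qp i ∩ Qp j) ∧ IsExtreme ℝ (Qp j) (Qp i ∩ Qp j)))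
    (f : (N → ℝ) → ℝ)
    (haff : ∀ i, ∃ g : (N → ℝ) →ᵃ[ℝ] ℝ, Set.EqOn f g (Qp i))
    (hconv : ∀ i j, i ≠ j →
      (IsExtreme ℝ (Qp i) (Qp i ∩ Qp j) ∧ IsExtreme ℝ (Qp j) (Qp i ∩ Qp j) ∧
        polyDim (Qp i ∩ Qp j) + 1 = polyDim Q) →
      PartialConvexOn (Qp i ∪ Qp j) f) :
    ConvexOn ℝ Q f := by
  classical
  choose g hg using haff
  choose Vp hVp' using hVp
  have hQconv : Convex ℝ Q := hQ ▸ convex_convexHull ℝ _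
  have hQpconv : ∀ i, Convex ℝ (Qp i) := fun i => (hVp' i) ▸ convex_convexHull ℝ _
  have hQpclosed : ∀ i, IsClosed (Qp i) := fun i =>
    (hVp' i) ▸ ((Vp i).finite_toSet.isCompact_convexHull ℝ).isClosed
  have hQpsub : ∀ i, Qp i ⊆ Q := fun i z hz => by
    rw [← hcover]; exact mem_iUnion.2 ⟨i, hz⟩
  have hfc : ContinuousOn f Q := by
    rw [← hcover]
    exact (locallyFinite_of_finite Qp).continuousOn_iUnion hQpclosed
      (fun i => ContinuousOn.congr (g i).continuous_of_finiteDimensional.continuousOn (hg i))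
  refine ⟨hQconv, ?_⟩
  intro x hx y hy a b ha hb hab
  set d := polyDim Q with hd
  -- dimension of an intersection is at most d
  have hdle : ∀ i j : Fin n, polyDim (Qp i ∩ Qp j) ≤ d := by
    intro i j
    have h1 : affineSpan ℝ (Qp i ∩ Qp j) ≤ affineSpan ℝ (Qp i) :=
      affineSpan_mono ℝ inter_subset_left
    have h2 := AffineSubspace.direction_le h1
    calc polyDim (Qp i ∩ Qp j) ≤ polyDim (Qp i) := Submodule.finrank_mono h2
      _ = d := hdim i
  -- the "bad pairs" whose intersection is too small, and associated affine subspaces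
  set Bad : Fin n × Fin n → Prop := fun p => p.1 ≠ p.2 ∧ (Qp p.1 ∩ Qp p.2).Nonempty ∧
    polyDim (Qp p.1 ∩ Qp p.2) + 2 ≤ d with hBad
  set WS : Fin n × Fin n → AffineSubspace ℝ (N → ℝ) := fun p =>
    affineSpan ℝ (insert y (Qp p.1 ∩ Qp p.2)) with hWS
  set 𝒲 : Finset (AffineSubspace ℝ (N → ℝ)) :=
    (Finset.univ.filter Bad).image WS with h𝒲
  have hproper : ∀ W ∈ 𝒲, ¬ (Q ⊆ (W : Set (N → ℝ))) := by
    intro W hW hsub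
    rw [h𝒲] at hW
    obtain ⟨p, hp, rfl⟩ := Finset.mem_image.1 hW
    obtain ⟨hne, ⟨z0, hz0⟩, hdim2⟩ : Bad p := (Finset.mem_filter.1 hp).2
    have hz0span : z0 ∈ affineSpan ℝ (Qp p.1 ∩ Qp p.2) := mem_affineSpan ℝ hz0
    have hdir : (WS p).direction =
        Submodule.span ℝ {y - z0} ⊔ (affineSpan ℝ (Qp p.1 ∩ Qp p.2)).direction := by
      show (affineSpan ℝ (insert y (Qp p.1 ∩ Qp p.2))).direction = _
      rw [← affineSpan_insert_affineSpan ℝ y (Qp p.1 ∩ Qp p.2),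
        AffineSubspace.direction_affineSpan_insert hz0span, vsub_eq_sub]
    have hrank : Module.finrank ℝ (WS p).direction ≤ d - 1 := by
      rw [hdir]
      have h1 : Module.finrank ℝ (Submodule.span ℝ ({y - z0} : Set (N → ℝ))) ≤ 1 := by
        by_cases hz : y - z0 = 0
        · rw [hz, Submodule.span_zero_singleton, finrank_bot]
          omega
        · rw [finrank_span_singleton hz]
      have h2 := Submodule.finrank_sup_add_finrank_inf_eq
        (Submodule.span ℝ ({y - z0} : Set (N → ℝ)))
        (affineSpan ℝ (Qp p.1 ∩ Qp p.2)).direction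
      have hpd : polyDim (Qp p.1 ∩ Qp p.2) =
          Module.finrank ℝ (affineSpan ℝ (Qp p.1 ∩ Qp p.2)).direction := rfl
      omega
    have h3 : affineSpan ℝ Q ≤ WS p := affineSpan_le.2 hsub
    have h4 := Submodule.finrank_mono (AffineSubspace.direction_le h3)
    have hQd : Module.finrank ℝ (affineSpan ℝ Q).direction = d := rfl
    rw [hQd] at h4
    omega
  -- key step: the convexity inequality holds when `x` is replaced by a good point `x'`
  have hkey : ∀ x' ∈ Q, (∀ W ∈ 𝒲, x' ∉ W) →
      f (a • x' + b • y) ≤ a * f x' + b * f y := by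
    intro x' hx' hx'avoid
    by_cases hxy : x' = y
    · subst hxy
      have h1 : a • x' + b • x' = x' := by rw [← add_smul, hab, one_smul]
      have h2 : a * f x' + b * f x' = f x' := by rw [← add_mul, hab, one_mul]
      rw [h1, h2]
    · set γ : ℝ → (N → ℝ) := fun t => x' + t • (y - x') with hγ
      have hγcont : Continuous γ := by
        rw [hγ]; exact continuous_const.add (continuous_id.smul continuous_const)
      have hγcomb : ∀ (c e u v : ℝ), c + e = 1 → γ (c*u + e*v) = c • γ u + e • γ v := by
        intro c e u v hce
        have hc : c = 1 - e := by linarith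
        subst hc
        simp only [hγ]
        module
      have hγQ : ∀ t ∈ Icc (0:ℝ) 1, γ t ∈ Q := by
        intro t ht
        have h1 : (1-t) • x' + t • y ∈ Q := hQconv hx' hy (by linarith [ht.2]) ht.1 (by ring)
        have h2 : γ t = (1-t) • x' + t • y := by simp only [hγ]; module
        rwa [h2]
      set I : Fin n → Set ℝ := fun i => Icc (0:ℝ) 1 ∩ γ ⁻¹' (Qp i) with hI
      have hIclosed : ∀ i, IsClosed (I i) := fun i =>
        isClosed_Icc.inter ((hQpclosed i).preimage hγcont)
      have hIconv : ∀ i, Convex ℝ (I i) := by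
        intro i u hu v hv c e hc he hce
        constructor
        · exact (convex_Icc (0:ℝ) 1) hu.1 hv.1 hc he hce
        · have h1 : γ (c*u + e*v) = c • γ u + e • γ v := hγcomb c e u v hce
          simp only [mem_preimage, smul_eq_mul] at *
          rw [h1]
          exact (hQpconv i) hu.2 hv.2 hc he hce
      have hIcov : Icc (0:ℝ) 1 ⊆ ⋃ i, I i := by
        intro t ht
        have := hγQ t ht
        rw [← hcover] at this
        obtain ⟨i, hi⟩ := mem_iUnion.1 this
        exact mem_iUnion.2 ⟨i, ht, hi⟩
      have hmid : ∀ t ∈ Ioo (0:ℝ) 1, ∃ ε > 0, t - ε ∈ Icc (0:ℝ) 1 ∧ t + ε ∈ Icc (0:ℝ) 1 ∧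
          (f ∘ γ) t ≤ ((f ∘ γ) (t - ε) + (f ∘ γ) (t + ε)) / 2 := by
        intro t ht
        have htm : t ∈ Icc (0:ℝ) 1 := ⟨ht.1.le, ht.2.le⟩
        obtain ⟨i, ε₁, hε₁, hL⟩ := exists_left_interval hIclosed hIconv hIcov htm ht.1
        obtain ⟨j, ε₂, hε₂, hR⟩ := exists_right_interval hIclosed hIconv hIcov htm ht.2
        set ε := min ε₁ ε₂ with hε
        have hεpos : 0 < ε := lt_min hε₁ hε₂
        have hu : t - ε ∈ I i := hL ⟨by simp only [hε]; have := min_le_left ε₁ ε₂; linarith,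
          by linarith⟩
        have hv : t + ε ∈ I j := hR ⟨by linarith,
          by simp only [hε]; have := min_le_right ε₁ ε₂; linarith⟩
        have hti : t ∈ I i := hL ⟨by linarith, le_refl t⟩
        have htj : t ∈ I j := hR ⟨le_refl t, by linarith⟩
        have hmidpt : γ t = (2⁻¹ : ℝ) • γ (t - ε) + (2⁻¹ : ℝ) • γ (t + ε) := by
          rw [← hγcomb 2⁻¹ 2⁻¹ (t - ε) (t + ε) (by norm_num)]
          ring_nf
        refine ⟨ε, hεpos, hu.1, hv.1, ?_⟩
        simp only [Function.comp_apply]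
        by_cases hQij : Qp i = Qp j
        · have h1 : γ (t - ε) ∈ Qp i := hu.2
          have h2 : γ (t + ε) ∈ Qp i := hQij ▸ hv.2
          have ht' : γ t ∈ Qp i := hti.2
          rw [hg i ht', hg i h1, hg i h2, hmidpt,
            affineMap_combo (g i) (by norm_num : (2:ℝ)⁻¹ + 2⁻¹ = 1)]
          ring_nf
          linarith [le_refl (0:ℝ)]
        · have hij : i ≠ j := fun he => hQij (by rw [he])
          have hzmem : γ t ∈ Qp i ∩ Qp j := ⟨hti.2, htj.2⟩
          have hnotbad : ¬ Bad (i, j) := by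
            intro hbad
            have hWmem : WS (i, j) ∈ 𝒲 := by
              rw [h𝒲]
              exact Finset.mem_image_of_mem _
                (Finset.mem_filter.2 ⟨Finset.mem_univ _, hbad⟩)
            apply hx'avoid _ hWmem
            have hzW : γ t ∈ WS (i, j) :=
              subset_affineSpan ℝ _ (mem_insert_of_mem _ hzmem)
            have hyW : y ∈ WS (i, j) := subset_affineSpan ℝ _ (mem_insert _ _)
            have hmem := (WS (i, j)).smul_vsub_vadd_mem ((1 - t)⁻¹) hzW hyW hyW
            have heq : (1 - t)⁻¹ • (γ t -ᵥ y) +ᵥ y = x' := by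
              have ht1 : (1:ℝ) - t ≠ 0 := by
                intro hz; rw [sub_eq_zero] at hz; exact absurd hz.symm (ne_of_lt ht.2)
              simp only [vsub_eq_sub, vadd_eq_add, hγ]
              have hexp : x' + t • (y - x') - y = (1 - t) • (x' - y) := by module
              rw [hexp, smul_smul, inv_mul_cancel₀ ht1, one_smul]
              module
            rwa [heq] at hmem
          have hcases : polyDim (Qp i ∩ Qp j) + 1 = d ∨ polyDim (Qp i ∩ Qp j) = d := by
            have h1 := hdle i j
            rw [hBad] at hnotbad
            simp only [ne_eq] at hnotbad
            have h2 : ¬ (polyDim (Qp i ∩ Qp j) + 2 ≤ d) := by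
              intro hcon
              exact hnotbad ⟨hij, ⟨γ t, hzmem⟩, hcon⟩
            omega
          have hext : IsExtreme ℝ (Qp i) (Qp i ∩ Qp j) ∧ IsExtreme ℝ (Qp j) (Qp i ∩ Qp j) := by
            rcases hcomplex i j hij with hemp | h
            · rw [hemp] at hzmem; exact absurd hzmem (Set.notMem_empty _)
            · exact h
          rcases hcases with hfacet | hfull
          · have hpc := hconv i j hij ⟨hext.1, hext.2, by rw [hfacet, hd]⟩
            have h1 : γ (t - ε) ∈ Qp i ∪ Qp j := Or.inl hu.2
            have h2 : γ (t + ε) ∈ Qp i ∪ Qp j := Or.inr hv.2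
            have h3 : (2⁻¹ : ℝ) • γ (t - ε) + (2⁻¹ : ℝ) • γ (t + ε) ∈ Qp i ∪ Qp j := by
              rw [← hmidpt]; exact Or.inl hti.2
            have h4 := hpc h1 h2 (by norm_num) (by norm_num) (by norm_num) h3
            rw [← hmidpt] at h4
            linarith
          · exfalso
            apply hQij
            have hFconv : Convex ℝ (Qp i ∩ Qp j) := (hQpconv i).inter (hQpconv j)
            have hsubF : ∀ kk : Fin n, IsExtreme ℝ (Qp kk) (Qp i ∩ Qp j) →
                Qp kk ⊆ Qp i ∩ Qp j := by
              intro kk hextk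
              have hdirle : (affineSpan ℝ (Qp i ∩ Qp j)).direction ≤
                  (affineSpan ℝ (Qp kk)).direction :=
                AffineSubspace.direction_le (affineSpan_mono ℝ hextk.1)
              have hdeq : (affineSpan ℝ (Qp i ∩ Qp j)).direction =
                  (affineSpan ℝ (Qp kk)).direction :=
                Submodule.eq_of_le_of_finrank_eq hdirle
                  (show polyDim (Qp i ∩ Qp j) = polyDim (Qp kk) by rw [hfull, hdim kk])
              have hspan : Qp kk ⊆ (affineSpan ℝ (Qp i ∩ Qp j) : Set (N → ℝ)) := by
                intro c hc
                have hzin : γ t ∈ affineSpan ℝ (Qp i ∩ Qp j) := mem_affineSpan ℝ hzmem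
                have hcin : c ∈ affineSpan ℝ (Qp kk) := mem_affineSpan ℝ hc
                have hzin' : γ t ∈ affineSpan ℝ (Qp kk) :=
                  affineSpan_mono ℝ hextk.1 hzin
                have hvd : c -ᵥ γ t ∈ (affineSpan ℝ (Qp i ∩ Qp j)).direction := by
                  rw [hdeq]; exact AffineSubspace.vsub_mem_direction hcin hzin'
                have := AffineSubspace.vadd_mem_of_mem_direction hvd hzin
                simpa using this
              exact extreme_subset_of_span hFconv hextk hspan
            have hQi := hsubF i hext.1
            have hQj := hsubF j hext.2
            exact subset_antisymm (fun z hz => (hQi hz).2) (fun z hz => (hQj hz).1)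
      have hgc : ContinuousOn (f ∘ γ) (Icc 0 1) :=
        hfc.comp hγcont.continuousOn (fun t ht => hγQ t ht)
      have hchord := le_chord_of_local_midpoint hgc hmid b ⟨hb, by linarith⟩
      simp only [Function.comp_apply] at hchord
      have e0 : γ 0 = x' := by simp [hγ]
      have e1 : γ 1 = y := by simp only [hγ, one_smul]; module
      have eb : γ b = a • x' + b • y := by
        have hc : a = 1 - b := by linarith
        subst hc
        simp only [hγ]
        module
      rw [e0, e1, eb] at hchord
      have hba : 1 - b = a := by linarith
      rw [hba] at hchord
      exact hchord
  -- limiting argument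
  have hz0Q : a • x + b • y ∈ Q := hQconv hx hy ha hb hab
  refine le_of_forall_pos_le_add ?_
  intro δ hδ
  have hcx := hfc x hx
  have hcz := hfc _ hz0Q
  rw [Metric.continuousWithinAt_iff] at hcx hcz
  obtain ⟨ε₁, hε₁, H₁⟩ := hcx (δ/2) (by linarith)
  obtain ⟨ε₂, hε₂, H₂⟩ := hcz (δ/2) (by linarith)
  have hρ : 0 < min ε₁ ε₂ / 2 := by
    have := lt_min hε₁ hε₂
    linarith
  obtain ⟨x', hx'Q, hx'dist, hx'avoid⟩ := exists_avoid_near hQconv hx 𝒲 hproper hρ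
  have hkey' := hkey x' hx'Q hx'avoid
  have ha1 : a ≤ 1 := by linarith
  have hd1 : dist x' x < ε₁ := by
    have h1 : min ε₁ ε₂ / 2 < min ε₁ ε₂ := by
      have := lt_min hε₁ hε₂; linarith
    have := min_le_left ε₁ ε₂
    linarith
  have hfx : dist (f x') (f x) < δ/2 := H₁ hx'Q hd1
  have hz'Q : a • x' + b • y ∈ Q := hQconv hx'Q hy ha hb hab
  have hdz : dist (a • x' + b • y) (a • x + b • y) < ε₂ := by
    have heq : (a • x' + b • y) - (a • x + b • y) = a • (x' - x) := by module
    rw [dist_eq_norm, heq, norm_smul, Real.norm_eq_abs, abs_of_nonneg ha]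
    have h1 : ‖x' - x‖ = dist x' x := (dist_eq_norm x' x).symm
    rw [h1]
    have h2 : a * dist x' x ≤ dist x' x :=
      mul_le_of_le_one_left dist_nonneg ha1
    have h3 : min ε₁ ε₂ / 2 < min ε₁ ε₂ := by
      have := lt_min hε₁ hε₂; linarith
    have := min_le_right ε₁ ε₂
    linarith
  have hfz : dist (f (a • x' + b • y)) (f (a • x + b • y)) < δ/2 := H₂ hz'Q hdz
  rw [Real.dist_eq] at hfx hfz
  have hfx1 : f x' ≤ f x + δ/2 := by
    have := abs_lt.1 hfx
    linarith [this.1, this.2]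
  have hfz1 : f (a • x + b • y) ≤ f (a • x' + b • y) + δ/2 := by
    have := abs_lt.1 hfz
    linarith [this.1, this.2]
  have h5 : a * f x' ≤ a * (f x + δ/2) := mul_le_mul_of_nonneg_left hfx1 ha
  have h6 : a * (δ/2) ≤ δ/2 := by nlinarith
  calc f (a • x + b • y) ≤ f (a • x' + b • y) + δ/2 := hfz1
    _ ≤ (a * f x' + b * f y) + δ/2 := by linarith
    _ ≤ (a * f x + b * f y) + δ := by nlinarith
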